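/- Let d ≥ 2 and C ∈ (0,1). For the birth-death chain on ℕ absorbed at 0 with up-probability p_k = (1 + C·k^{−1/d})/2 from each state k ≥ 2 and arbitrary up-probability p₁ ∈ (0,1) from state 1, the survival probability from state 1 is at least (1/p₁ + (q₁/p₁)·I·C^{−d/(d−1)})⁻¹ > 0, where q₁ = 1−p₁ and I = ∫₀^∞ exp(−x^{(d−1)/d}) dx. -/

import Mathlib

open MeasureTheory

lemma aux_tanh {a : ℝ} (ha : 0 ≤ a) :
    (1 - a) / (1 + a) ≤ Real.exp (-(2 * a)) := by
  have h1a : (0:ℝ) < 1 + a := by linarith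
  rw [div_le_iff₀ h1a]
  set f : ℝ → ℝ := fun x => Real.exp (-(2 * x)) * (1 + x) - (1 - x) with hf
  have hderiv : ∀ x : ℝ, HasDerivAt f (1 - Real.exp (-(2 * x)) * (1 + 2 * x)) x := by
    intro x
    have h1 : HasDerivAt (fun x : ℝ => -(2 * x)) (-2) x := by
      simpa using ((hasDerivAt_id x).const_mul (-2:ℝ))
    have h2 : HasDerivAt (fun x : ℝ => Real.exp (-(2 * x))) (Real.exp (-(2 * x)) * (-2)) x :=
      h1.exp
    have h3 : HasDerivAt (fun x : ℝ => 1 + x) 1 x := by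
      simpa using (hasDerivAt_id x).const_add (1:ℝ)
    have h5 : HasDerivAt (fun x : ℝ => 1 - x) (-1) x := by
      simpa using (hasDerivAt_id x).const_sub (1:ℝ)
    have h6 := (h2.mul h3).sub h5
    exact h6.congr_deriv (by ring)
  have hmono : Monotone f := by
    apply monotone_of_deriv_nonneg
    · exact fun x => (hderiv x).differentiableAt
    · intro x
      rw [(hderiv x).deriv]
      have hx : 2 * x + 1 ≤ Real.exp (2 * x) := Real.add_one_le_exp (2 * x)
      have := mul_le_mul_of_nonneg_left hx (Real.exp_pos (-(2 * x))).le
      rw [← Real.exp_add] at this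
      simp only [neg_add_cancel, Real.exp_zero] at this
      nlinarith
  have h0 : f 0 ≤ f a := hmono ha
  simp only [hf, mul_zero, neg_zero, Real.exp_zero, one_mul, sub_zero, add_zero] at h0
  linarith

lemma aux_sum_rpow (d : ℕ) (hd : 2 ≤ d) :
    ∀ m : ℕ, 2 ≤ m →
      ((m:ℝ)) ^ (((d:ℝ) - 1) / d) ≤ 2 * ∑ k ∈ Finset.Icc 2 m, (k:ℝ) ^ (-(1:ℝ) / d) := by
  have hd0 : (0:ℝ) < d := by positivity
  have hd1 : (1:ℝ) ≤ (d:ℝ) - 1 := by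
    have : (2:ℝ) ≤ d := by exact_mod_cast hd
    linarith
  set α : ℝ := ((d:ℝ) - 1) / d with hα
  set β : ℝ := -(1:ℝ) / d with hβ
  have hαβ : α = 1 + β := by rw [hα, hβ]; field_simp; ring
  have hβα : β = α - 1 := by rw [hαβ]; ring
  have hα0 : 0 < α := by rw [hα]; positivity
  have hα1 : α ≤ 1 := by
    rw [hα, div_le_one hd0]; linarith
  have hβ1 : -1 ≤ β := by
    rw [hβα]; linarith
  intro m hm
  induction m, hm using Nat.le_induction with
  | base =>
    rw [Finset.Icc_self, Finset.sum_singleton]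
    have : (2:ℝ) * (2:ℝ) ^ β = (2:ℝ) ^ α := by
      rw [hαβ, Real.rpow_add (by norm_num : (0:ℝ) < 2), Real.rpow_one]
    rw [show ((2:ℕ):ℝ) = (2:ℝ) by norm_num, this]
  | succ m hm ih =>
    rw [← Finset.insert_Icc_right_eq_Icc_add_one (by omega), Finset.sum_insert (by simp)]
    have hmr : (2:ℝ) ≤ (m:ℝ) := by exact_mod_cast hm
    have hm0 : (0:ℝ) < m := by linarith
    have hm10 : (0:ℝ) < (m:ℝ) + 1 := by linarith
    push_cast
    have key : ((m:ℝ) + 1) ^ α ≤ (m:ℝ) ^ α + 2 * ((m:ℝ) + 1) ^ β := by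
      have h1 : ((m:ℝ) + 1) ^ α ≤ (m:ℝ) ^ α * (1 + α * (1 / m)) := by
        have heq : (m:ℝ) + 1 = (m:ℝ) * (1 + 1 / m) := by field_simp
        rw [heq, Real.mul_rpow hm0.le (by positivity)]
        have hb : (1 + 1/(m:ℝ)) ^ α ≤ 1 + α * (1 / m) := by
          have h1m : (-1:ℝ) ≤ 1/(m:ℝ) := by
            have : (0:ℝ) ≤ 1/(m:ℝ) := by positivity
            linarith
          exact rpow_one_add_le_one_add_mul_self h1m hα0.le hα1
        exact mul_le_mul_of_nonneg_left hb (Real.rpow_nonneg hm0.le α)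
      have h2 : (m:ℝ) ^ α * (1 + α * (1 / m)) = (m:ℝ) ^ α + α * (m:ℝ) ^ β := by
        rw [hβα, Real.rpow_sub hm0, Real.rpow_one]
        field_simp
      have h3 : α * (m:ℝ) ^ β ≤ (m:ℝ) ^ β := by
        have := Real.rpow_nonneg hm0.le β
        nlinarith
      have h4 : (m:ℝ) ^ β ≤ 2 * ((m:ℝ) + 1) ^ β := by
        have ha : ((2:ℝ) * m) ^ β ≤ ((m:ℝ) + 1) ^ β := by
          apply Real.rpow_le_rpow_of_nonpos hm10 (by linarith)
          rw [hβ]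
          apply div_nonpos_of_nonpos_of_nonneg <;> norm_num
        have hb : ((2:ℝ) * m) ^ β = (2:ℝ) ^ β * (m:ℝ) ^ β :=
          Real.mul_rpow (by norm_num) hm0.le
        have hc : (2:ℝ)⁻¹ ≤ (2:ℝ) ^ β := by
          have := Real.rpow_le_rpow_of_exponent_le (by norm_num : (1:ℝ) ≤ 2) hβ1
          rwa [Real.rpow_neg_one] at this
        have hd' : (0:ℝ) ≤ (m:ℝ) ^ β := Real.rpow_nonneg hm0.le β
        nlinarith
      calc ((m:ℝ) + 1) ^ α ≤ (m:ℝ) ^ α * (1 + α * (1 / m)) := h1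
        _ = (m:ℝ) ^ α + α * (m:ℝ) ^ β := h2
        _ ≤ (m:ℝ) ^ α + (m:ℝ) ^ β := by linarith
        _ ≤ (m:ℝ) ^ α + 2 * ((m:ℝ) + 1) ^ β := by linarith
    linarith

lemma aux_prod (d : ℕ) (hd : 2 ≤ d) {C : ℝ} (hC : C ∈ Set.Ioo (0:ℝ) 1)
    (m : ℕ) (hm : 2 ≤ m) :
    ∏ k ∈ Finset.Icc 2 m,
        (1 - C * (k : ℝ) ^ (-(1 : ℝ) / d)) / (1 + C * (k : ℝ) ^ (-(1 : ℝ) / d))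
      ≤ Real.exp (-(C * (m:ℝ) ^ (((d:ℝ) - 1) / d))) := by
  obtain ⟨hC0, hC1⟩ := hC
  have hd0 : (0:ℝ) < d := by positivity
  have hak : ∀ k : ℕ, k ∈ Finset.Icc 2 m → 0 ≤ C * (k:ℝ) ^ (-(1:ℝ)/d) ∧
      C * (k:ℝ) ^ (-(1:ℝ)/d) < 1 := by
    intro k hk
    have hk2 : 2 ≤ k := (Finset.mem_Icc.mp hk).1
    have hk1 : (1:ℝ) ≤ (k:ℝ) := by exact_mod_cast Nat.one_le_of_lt hk2
    have hpow0 : (0:ℝ) ≤ (k:ℝ) ^ (-(1:ℝ)/d) := Real.rpow_nonneg (by linarith) _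
    have hpow1 : (k:ℝ) ^ (-(1:ℝ)/d) ≤ 1 := by
      apply Real.rpow_le_one_of_one_le_of_nonpos hk1
      apply div_nonpos_of_nonpos_of_nonneg <;> [norm_num; positivity]
    constructor
    · positivity
    · calc C * (k:ℝ) ^ (-(1:ℝ)/d) ≤ C * 1 := by
            exact mul_le_mul_of_nonneg_left hpow1 hC0.le
      _ < 1 := by linarith
  have step1 : ∏ k ∈ Finset.Icc 2 m,
        (1 - C * (k : ℝ) ^ (-(1 : ℝ) / d)) / (1 + C * (k : ℝ) ^ (-(1 : ℝ) / d))
      ≤ ∏ k ∈ Finset.Icc 2 m, Real.exp (-(2 * (C * (k:ℝ) ^ (-(1:ℝ)/d)))) := by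
    apply Finset.prod_le_prod
    · intro k hk
      obtain ⟨h0, h1⟩ := hak k hk
      apply div_nonneg (by linarith) (by linarith)
    · intro k hk
      exact aux_tanh (hak k hk).1
  rw [← Real.exp_sum] at step1
  refine step1.trans (Real.exp_le_exp.mpr ?_)
  have hsum := aux_sum_rpow d hd m hm
  have heq : ∑ k ∈ Finset.Icc 2 m, -(2 * (C * (k:ℝ) ^ (-(1:ℝ)/d)))
      = -(2 * C * ∑ k ∈ Finset.Icc 2 m, (k:ℝ) ^ (-(1:ℝ)/d)) := by
    rw [Finset.mul_sum, ← Finset.sum_neg_distrib]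
    exact Finset.sum_congr rfl (fun k _ => by ring)
  rw [heq]
  have := mul_le_mul_of_nonneg_left hsum hC0.le
  nlinarith [this]

lemma aux_int (d : ℕ) (hd : 2 ≤ d) {C : ℝ} (hC : C ∈ Set.Ioo (0:ℝ) 1) (n : ℕ) :
    ∑ i ∈ Finset.range n, Real.exp (-(C * ((i:ℝ) + 2) ^ (((d:ℝ) - 1) / d)))
      ≤ (∫ x in Set.Ioi (0 : ℝ), Real.exp (-(x ^ (((d : ℝ) - 1) / d)))) *
          C ^ (-(d : ℝ) / ((d : ℝ) - 1)) := by
  obtain ⟨hC0, hC1⟩ := hC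
  have hd0 : (0:ℝ) < d := by positivity
  have hd1 : (1:ℝ) ≤ (d:ℝ) - 1 := by
    have : (2:ℝ) ≤ d := by exact_mod_cast hd
    linarith
  set α : ℝ := ((d:ℝ) - 1) / d with hα
  have hα0 : 0 < α := by rw [hα]; positivity
  set g : ℝ → ℝ := fun x => Real.exp (-C * x ^ α) with hg
  -- integrability
  have hint : IntegrableOn g (Set.Ioi (0:ℝ)) := by
    rw [← integrableOn_Ioi_comp_rpow_iff' g (p := α⁻¹) (by positivity)]
    have base : IntegrableOn (fun x : ℝ => x ^ (α⁻¹ - 1) * Real.exp (-C * x ^ (1:ℝ)))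
        (Set.Ioi (0:ℝ)) := by
      apply integrableOn_rpow_mul_exp_neg_mul_rpow _ one_pos hC0
      have : (0:ℝ) < α⁻¹ := by positivity
      linarith
    apply base.congr_fun _ measurableSet_Ioi
    intro x hx
    have hx0 : (0:ℝ) < x := hx
    have : (x ^ α⁻¹) ^ α = x := by
      rw [← Real.rpow_mul hx0.le, inv_mul_cancel₀ hα0.ne', Real.rpow_one]
    simp only [hg, smul_eq_mul, this, Real.rpow_one]
  -- sum ≤ interval integral
  have hanti : AntitoneOn g (Set.Icc (1:ℝ) (1 + n)) := by
    intro x hx y hy hxy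
    simp only [hg]
    apply Real.exp_le_exp.mpr
    have h1x : (0:ℝ) ≤ x := by linarith [hx.1]
    have := Real.rpow_le_rpow h1x hxy hα0.le
    nlinarith
  have hsum := hanti.sum_le_integral
  have hcast : ∑ i ∈ Finset.range n, Real.exp (-(C * ((i:ℝ) + 2) ^ α))
      = ∑ i ∈ Finset.range n, g ((1:ℝ) + ((i + 1 : ℕ) : ℝ)) := by
    refine Finset.sum_congr rfl (fun i _ => ?_)
    have : (1:ℝ) + ((i + 1 : ℕ) : ℝ) = (i:ℝ) + 2 := by push_cast; ring
    rw [this]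
    simp [hg, neg_mul]
  -- interval integral ≤ integral over Ioi 0
  have hioc : ∫ x in (1:ℝ)..(1 + n), g x = ∫ x in Set.Ioc (1:ℝ) (1 + n), g x :=
    intervalIntegral.integral_of_le (by linarith [Nat.cast_nonneg (α := ℝ) n])
  have hmono2 : ∫ x in Set.Ioc (1:ℝ) (1 + (n:ℝ)), g x ≤ ∫ x in Set.Ioi (0:ℝ), g x := by
    apply setIntegral_mono_set hint
    · exact Filter.Eventually.of_forall (fun x => (Real.exp_pos _).le)
    · apply HasSubset.Subset.eventuallyLE
      intro x hx
      exact lt_trans one_pos hx.1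
  -- value of the integral
  have hval : ∫ x in Set.Ioi (0:ℝ), g x
      = (∫ x in Set.Ioi (0 : ℝ), Real.exp (-(x ^ α))) * C ^ (-(d : ℝ) / ((d : ℝ) - 1)) := by
    rw [hg]
    rw [integral_exp_neg_mul_rpow hα0 hC0]
    rw [show ∫ x in Set.Ioi (0 : ℝ), Real.exp (-(x ^ α)) = Real.Gamma (1/α + 1) from
      integral_exp_neg_rpow hα0]
    rw [mul_comm]
    congr 1
    rw [hα, div_div_eq_mul_div]
    ring_nf
  calc ∑ i ∈ Finset.range n, Real.exp (-(C * ((i:ℝ) + 2) ^ α))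
      = ∑ i ∈ Finset.range n, g ((1:ℝ) + ((i + 1 : ℕ) : ℝ)) := hcast
    _ ≤ ∫ x in (1:ℝ)..(1 + n), g x := hsum
    _ = ∫ x in Set.Ioc (1:ℝ) (1 + (n:ℝ)), g x := hioc
    _ ≤ ∫ x in Set.Ioi (0:ℝ), g x := hmono2
    _ = _ := hval

/-- For the birth-death chain on ℕ absorbed at 0 with up-probability
`p_k = (1 + C k^{−1/d})/2` from each state `k ≥ 2` and `p₁ ∈ (0,1)` from state 1,
the survival probability from state 1 (given by the generalized gambler's ruin series)
is at least `(1/p₁ + (q₁/p₁)·I·C^{−d/(d−1)})⁻¹ > 0`, where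
`I = ∫₀^∞ exp(−x^{(d−1)/d}) dx`. -/
theorem stmt_12 (d : ℕ) (hd : 2 ≤ d) (C : ℝ) (hC : C ∈ Set.Ioo (0 : ℝ) 1)
    (p₁ : ℝ) (hp₁ : p₁ ∈ Set.Ioo (0 : ℝ) 1)
    (surv : ℝ)
    (hsurv : surv = (1 + ((1 - p₁) / p₁) * (1 + ∑' ℓ : ℕ,
      ∏ k ∈ Finset.Icc 2 (ℓ + 2),
        (1 - C * (k : ℝ) ^ (-(1 : ℝ) / d)) / (1 + C * (k : ℝ) ^ (-(1 : ℝ) / d))))⁻¹) :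
    (1 / p₁ + ((1 - p₁) / p₁) *
        (∫ x in Set.Ioi (0 : ℝ), Real.exp (-(x ^ (((d : ℝ) - 1) / d)))) *
        C ^ (-(d : ℝ) / ((d : ℝ) - 1)))⁻¹ ≤ surv ∧
    0 < (1 / p₁ + ((1 - p₁) / p₁) *
        (∫ x in Set.Ioi (0 : ℝ), Real.exp (-(x ^ (((d : ℝ) - 1) / d)))) *
        C ^ (-(d : ℝ) / ((d : ℝ) - 1)))⁻¹ := by
  obtain ⟨hC0, hC1⟩ := hC
  obtain ⟨hp0, hp1⟩ := hp₁
  have hd0 : (0:ℝ) < d := by positivity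
  set t : ℕ → ℝ := fun ℓ => ∏ k ∈ Finset.Icc 2 (ℓ + 2),
      (1 - C * (k : ℝ) ^ (-(1 : ℝ) / d)) / (1 + C * (k : ℝ) ^ (-(1 : ℝ) / d)) with htdef
  set B := ∫ x in Set.Ioi (0 : ℝ), Real.exp (-(x ^ (((d : ℝ) - 1) / d))) with hB
  set E := C ^ (-(d : ℝ) / ((d : ℝ) - 1)) with hE
  have ht0 : ∀ ℓ : ℕ, 0 ≤ t ℓ := by
    intro ℓ
    apply Finset.prod_nonneg
    intro k hk
    have hk2 : 2 ≤ k := (Finset.mem_Icc.mp hk).1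
    have hk1 : (1:ℝ) ≤ (k:ℝ) := by exact_mod_cast Nat.one_le_of_lt hk2
    have hpow0 : (0:ℝ) ≤ (k:ℝ) ^ (-(1:ℝ)/d) := Real.rpow_nonneg (by linarith) _
    have hpow1 : (k:ℝ) ^ (-(1:ℝ)/d) ≤ 1 := by
      apply Real.rpow_le_one_of_one_le_of_nonpos hk1
      apply div_nonpos_of_nonpos_of_nonneg <;> [norm_num; positivity]
    have hlt : C * (k:ℝ) ^ (-(1:ℝ)/d) < 1 := by nlinarith
    have hge : 0 ≤ C * (k:ℝ) ^ (-(1:ℝ)/d) := by positivity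
    apply div_nonneg <;> linarith
  have htb : ∀ ℓ : ℕ, t ℓ ≤ Real.exp (-(C * ((ℓ:ℝ) + 2) ^ (((d:ℝ) - 1) / d))) := by
    intro ℓ
    have h := aux_prod d hd ⟨hC0, hC1⟩ (ℓ + 2) (by omega)
    have hc : ((ℓ + 2 : ℕ) : ℝ) = (ℓ:ℝ) + 2 := by push_cast; ring
    rwa [hc] at h
  have hpartial : ∀ n : ℕ, ∑ i ∈ Finset.range n, t i ≤ B * E := fun n =>
    le_trans (Finset.sum_le_sum fun i _ => htb i) (aux_int d hd ⟨hC0, hC1⟩ n)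
  have hS0 : 0 ≤ ∑' ℓ, t ℓ := tsum_nonneg ht0
  have hSle : ∑' ℓ, t ℓ ≤ B * E := Real.tsum_le_of_sum_range_le ht0 hpartial
  rw [hsurv]
  set S := ∑' ℓ, t ℓ with hSdef
  have hq : 0 ≤ (1 - p₁)/p₁ := div_nonneg (by linarith) hp0.le
  have hA1 : (1:ℝ) ≤ 1 + (1 - p₁)/p₁ * (1 + S) := by nlinarith
  have hAD : 1 + (1 - p₁)/p₁ * (1 + S) ≤ 1/p₁ + (1 - p₁)/p₁ * B * E := by
    have h1 : (1:ℝ) + (1 - p₁)/p₁ = 1/p₁ := by field_simp; ring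
    have h2 : (1 - p₁)/p₁ * S ≤ (1 - p₁)/p₁ * (B * E) := mul_le_mul_of_nonneg_left hSle hq
    have h3 : (1 - p₁)/p₁ * (1 + S) = (1 - p₁)/p₁ + (1 - p₁)/p₁ * S := by ring
    have h4 : (1 - p₁)/p₁ * B * E = (1 - p₁)/p₁ * (B * E) := by ring
    linarith
  constructor
  · exact inv_anti₀ (lt_of_lt_of_le one_pos hA1) hAD
  · apply inv_pos.mpr
    linarith
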